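/- In the group G = ⟨X, Y, Z | X^n = Z^α, Y^2 = 1, YX = X^{n-1}YZ^γ, YZ = ZY, XZ = ZX, Z^m = 1⟩, the commutator subgroup [G, G] is the cyclic subgroup generated by X^2 Z^{-α-γ}. -/

import Mathlib

/-- Relations for the central extension of the dihedral group `D_{2n}` by `ℤ/mℤ`
with parameters `(α, β, γ)`: generators `X = 0`, `Y = 1`, `Z = 2`. -/
def grels (n m : ℕ) (α β γ : ℤ) : Set (FreeGroup (Fin 3)) :=
  { FreeGroup.of (0 : Fin 3) ^ n * (FreeGroup.of (2 : Fin 3) ^ α)⁻¹,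
    FreeGroup.of (1 : Fin 3) ^ 2 * (FreeGroup.of (2 : Fin 3) ^ β)⁻¹,
    FreeGroup.of (1 : Fin 3) * FreeGroup.of (0 : Fin 3) *
      (FreeGroup.of (0 : Fin 3) ^ (n - 1) * FreeGroup.of (1 : Fin 3) *
        FreeGroup.of (2 : Fin 3) ^ γ)⁻¹,
    FreeGroup.of (1 : Fin 3) * FreeGroup.of (2 : Fin 3) *
      (FreeGroup.of (2 : Fin 3) * FreeGroup.of (1 : Fin 3))⁻¹,
    FreeGroup.of (0 : Fin 3) * FreeGroup.of (2 : Fin 3) *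
      (FreeGroup.of (2 : Fin 3) * FreeGroup.of (0 : Fin 3))⁻¹,
    FreeGroup.of (2 : Fin 3) ^ m }

/-- The central extension `G(α, β, γ)` of `D_{2n}` by `ℤ/mℤ`. -/
abbrev GG (n m : ℕ) (α β γ : ℤ) : Type := PresentedGroup (grels n m α β γ)

def gX (n m : ℕ) (α β γ : ℤ) : GG n m α β γ := PresentedGroup.of 0
def gY (n m : ℕ) (α β γ : ℤ) : GG n m α β γ := PresentedGroup.of 1
def gZ (n m : ℕ) (α β γ : ℤ) : GG n m α β γ := PresentedGroup.of 2

open scoped commutatorElement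

lemma stmt4aux_rel_one {rels : Set (FreeGroup (Fin 3))} {r} (hr : r ∈ rels) :
    PresentedGroup.mk rels r = 1 :=
  (QuotientGroup.eq_one_iff r).mpr (Subgroup.subset_normalClosure hr)

lemma stmt4aux_mem_normalizer {G : Type*} [Group G] {w g : G}
    (h1 : g * w * g⁻¹ ∈ Subgroup.zpowers w) (h2 : g⁻¹ * w * g ∈ Subgroup.zpowers w) :
    g ∈ Subgroup.normalizer (Subgroup.zpowers w : Set _) := by
  rw [Subgroup.mem_normalizer_iff]
  intro x
  constructor
  · rintro ⟨k, rfl⟩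
    simpa only [conj_zpow] using Subgroup.zpow_mem _ h1 k
  · rintro ⟨k, hk⟩
    simp only at hk
    have hx : x = g⁻¹ * w ^ k * g := by rw [hk]; group
    have hc : g⁻¹ * w ^ k * g = (g⁻¹ * w * g) ^ k := by
      have := conj_zpow (i := k) (a := g⁻¹) (b := w)
      simpa using this.symm
    rw [hx, hc]
    exact Subgroup.zpow_mem _ h2 k

/-- In `G(α, 0, γ)`, the commutator subgroup is the cyclic subgroup generated by
`X² Z^{-α-γ}`. -/
theorem stmt4 (n m : ℕ) (hn : 3 ≤ n) (hm : 1 ≤ m) (α γ : ℤ) :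
    commutator (GG n m α 0 γ) =
      Subgroup.zpowers ((gX n m α 0 γ) ^ 2 * (gZ n m α 0 γ) ^ (-α - γ)) := by
  set X := gX n m α 0 γ with hXdef
  set Y := gY n m α 0 γ with hYdef
  set Z := gZ n m α 0 γ with hZdef
  have h1 : X ^ n = Z ^ α := by
    have h := stmt4aux_rel_one (rels := grels n m α 0 γ)
      (r := FreeGroup.of (0 : Fin 3) ^ n * (FreeGroup.of (2 : Fin 3) ^ α)⁻¹) (by simp [grels])
    simp only [map_mul, map_pow, map_zpow, map_inv] at h
    exact mul_inv_eq_one.mp h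
  have h2 : Y * Y = 1 := by
    have h := stmt4aux_rel_one (rels := grels n m α 0 γ)
      (r := FreeGroup.of (1 : Fin 3) ^ 2 * (FreeGroup.of (2 : Fin 3) ^ (0:ℤ))⁻¹) (by simp [grels])
    simp only [map_mul, map_pow, map_zpow, map_inv, zpow_zero, inv_one, mul_one] at h
    rw [← sq]; exact h
  have h3 : Y * X = X ^ (n - 1) * Y * Z ^ γ := by
    have h := stmt4aux_rel_one (rels := grels n m α 0 γ)
      (r := FreeGroup.of (1 : Fin 3) * FreeGroup.of (0 : Fin 3) *
        (FreeGroup.of (0 : Fin 3) ^ (n - 1) * FreeGroup.of (1 : Fin 3) *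
          FreeGroup.of (2 : Fin 3) ^ γ)⁻¹) (by simp [grels])
    simp only [map_mul, map_pow, map_zpow, map_inv] at h
    exact mul_inv_eq_one.mp h
  have h4 : Y * Z = Z * Y := by
    have h := stmt4aux_rel_one (rels := grels n m α 0 γ)
      (r := FreeGroup.of (1 : Fin 3) * FreeGroup.of (2 : Fin 3) *
        (FreeGroup.of (2 : Fin 3) * FreeGroup.of (1 : Fin 3))⁻¹) (by simp [grels])
    simp only [map_mul, map_inv] at h
    exact mul_inv_eq_one.mp h
  have h5 : X * Z = Z * X := by
    have h := stmt4aux_rel_one (rels := grels n m α 0 γ)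
      (r := FreeGroup.of (0 : Fin 3) * FreeGroup.of (2 : Fin 3) *
        (FreeGroup.of (2 : Fin 3) * FreeGroup.of (0 : Fin 3))⁻¹) (by simp [grels])
    simp only [map_mul, map_inv] at h
    exact mul_inv_eq_one.mp h
  have hZcen : ∀ g : GG n m α 0 γ, Commute g Z := by
    intro g
    have hg : g ∈ Subgroup.centralizer {Z} := by
      refine PresentedGroup.generated_by _ _ (fun j => ?_) g
      fin_cases j <;> rw [Subgroup.mem_centralizer_iff] <;> rintro h ⟨rfl⟩
      · exact h5.symm
      · exact h4.symm
      · rfl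
    exact (Subgroup.mem_centralizer_iff.mp hg Z rfl).symm
  have central : ∀ (g : GG n m α 0 γ) (k : ℤ), Z ^ k * g = g * Z ^ k :=
    fun g k => ((hZcen g).zpow_right k).symm
  have hYinv : Y⁻¹ = Y := inv_eq_of_mul_eq_one_right h2
  have hXn1 : X ^ (n - 1) = Z ^ α * X⁻¹ := by
    have hx : X ^ (n - 1) * X = X ^ n := by
      rw [← pow_succ]; congr 1; omega
    rw [h1] at hx
    exact eq_mul_inv_of_mul_eq hx
  have hYXY : Y * X * Y⁻¹ = X⁻¹ * Z ^ (α + γ) := by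
    have e : Y * X * Y⁻¹ = X ^ (n - 1) * (Y * (Z ^ γ * Y⁻¹)) := by rw [h3]; group
    rw [e, central Y⁻¹ γ, mul_inv_cancel_left, hXn1, central X⁻¹ α, mul_assoc, ← zpow_add]
  set w := X ^ 2 * Z ^ (-α - γ) with hwdef
  have hwinv : w⁻¹ = X⁻¹ * X⁻¹ * Z ^ (α + γ) := by
    rw [hwdef, mul_inv_rev, ← zpow_neg, central ((X ^ 2)⁻¹) (-(-α - γ)),
      show (-(-α - γ)) = α + γ by ring, sq, mul_inv_rev]
  have hw : ⁅X, Y⁆ = w := by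
    have hinv : Y * X⁻¹ * Y⁻¹ = Z ^ (-(α + γ)) * X :=
      calc Y * X⁻¹ * Y⁻¹ = (Y * X * Y⁻¹)⁻¹ := by group
        _ = (X⁻¹ * Z ^ (α + γ))⁻¹ := by rw [hYXY]
        _ = Z ^ (-(α + γ)) * X := by rw [mul_inv_rev, inv_inv, zpow_neg]
    have e : ⁅X, Y⁆ = X * (Y * X⁻¹ * Y⁻¹) := by rw [commutatorElement_def]; group
    rw [e, hinv, ← mul_assoc, mul_assoc X, central X (-(α + γ)), ← mul_assoc,
      show X * X = X ^ 2 from (sq X).symm, hwdef, show (-(α + γ)) = -α - γ by ring]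
  have hcomXw : Commute X w := ((Commute.refl X).pow_right 2).mul_right ((hZcen X).zpow_right _)
  have hcomZw : Commute Z w := ((hZcen (X ^ 2)).symm.mul_right ((Commute.refl Z).zpow_right _))
  have eZ : Y * Z ^ (-α - γ) * Y⁻¹ = Z ^ (-α - γ) := by
    rw [mul_assoc, central Y⁻¹ (-α - γ), mul_inv_cancel_left]
  have hYwY : Y * w * Y⁻¹ = w⁻¹ := by
    calc Y * w * Y⁻¹
        = (Y * X * Y⁻¹) * (Y * X * Y⁻¹) * (Y * Z ^ (-α - γ) * Y⁻¹) := by rw [hwdef, sq]; group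
      _ = (X⁻¹ * Z ^ (α + γ)) * (X⁻¹ * Z ^ (α + γ)) * Z ^ (-α - γ) := by rw [hYXY, eZ]
      _ = X⁻¹ * (Z ^ (α + γ) * X⁻¹) * (Z ^ (α + γ) * Z ^ (-α - γ)) := by group
      _ = X⁻¹ * (X⁻¹ * Z ^ (α + γ)) * (Z ^ (α + γ) * Z ^ (-α - γ)) := by rw [central X⁻¹ (α + γ)]
      _ = X⁻¹ * X⁻¹ * Z ^ (α + γ) := by group
      _ = w⁻¹ := hwinv.symm
  have hnorm : (Subgroup.zpowers w).Normal := by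
    have hall : ∀ g : GG n m α 0 γ, g ∈ Subgroup.normalizer (Subgroup.zpowers w : Set _) := by
      intro g
      refine PresentedGroup.generated_by _ _ (fun j => ?_) g
      fin_cases j
      · show X ∈ Subgroup.normalizer (Subgroup.zpowers w : Set _)
        refine stmt4aux_mem_normalizer ?_ ?_
        · rw [hcomXw.eq, mul_inv_cancel_right]; exact Subgroup.mem_zpowers w
        · rw [hcomXw.inv_left.eq, mul_assoc, inv_mul_cancel, mul_one]
          exact Subgroup.mem_zpowers w
      · show Y ∈ Subgroup.normalizer (Subgroup.zpowers w : Set _)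
        refine stmt4aux_mem_normalizer ?_ ?_
        · rw [hYwY]; exact Subgroup.inv_mem _ (Subgroup.mem_zpowers w)
        · rw [hYinv, show Y * w * Y = Y * w * Y⁻¹ from by rw [hYinv], hYwY]
          exact Subgroup.inv_mem _ (Subgroup.mem_zpowers w)
      · show Z ∈ Subgroup.normalizer (Subgroup.zpowers w : Set _)
        refine stmt4aux_mem_normalizer ?_ ?_
        · rw [hcomZw.eq, mul_inv_cancel_right]; exact Subgroup.mem_zpowers w
        · rw [hcomZw.inv_left.eq, mul_assoc, inv_mul_cancel, mul_one]
          exact Subgroup.mem_zpowers w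
    exact ⟨fun x hx g => (Subgroup.mem_normalizer_iff.mp (hall g) x).mp hx⟩
  haveI := hnorm
  set q := QuotientGroup.mk' (Subgroup.zpowers w) with hqdef
  have hcomm_gen : ∀ i j : Fin 3,
      Commute (q (PresentedGroup.of i)) (q (PresentedGroup.of j)) := by
    have cxy : Commute (q X) (q Y) := by
      rw [← commutatorElement_eq_one_iff_commute, ← map_commutatorElement, hw]
      exact (QuotientGroup.eq_one_iff w).mpr (Subgroup.mem_zpowers w)
    have cxz : Commute (q X) (q Z) := by
      have := congrArg q h5
      simpa only [map_mul, commute_iff_eq] using this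
    have cyz : Commute (q Y) (q Z) := by
      have := congrArg q h4
      simpa only [map_mul, commute_iff_eq] using this
    intro i j
    fin_cases i <;> fin_cases j
    · exact Commute.refl _
    · exact cxy
    · exact cxz
    · exact cxy.symm
    · exact Commute.refl _
    · exact cyz
    · exact cxz.symm
    · exact cyz.symm
    · exact Commute.refl _
  have hcomm1 : ∀ (i : Fin 3) (g : GG n m α 0 γ),
      Commute (q (PresentedGroup.of i)) (q g) := by
    intro i g
    have hg : g ∈ (Subgroup.centralizer {q (PresentedGroup.of i)}).comap q := by
      refine PresentedGroup.generated_by _ _ (fun j => ?_) g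
      simp only [Subgroup.mem_comap, Subgroup.mem_centralizer_iff]
      intro h hh
      rw [Set.mem_singleton_iff] at hh
      subst hh
      exact hcomm_gen i j
    exact Subgroup.mem_centralizer_iff.mp (Subgroup.mem_comap.mp hg) _ (Set.mem_singleton _)
  have hcommQ : ∀ a b : GG n m α 0 γ, Commute (q a) (q b) := by
    intro a b
    have ha : a ∈ (Subgroup.centralizer {q b}).comap q := by
      refine PresentedGroup.generated_by _ _ (fun j => ?_) a
      simp only [Subgroup.mem_comap, Subgroup.mem_centralizer_iff]
      intro h hh
      rw [Set.mem_singleton_iff] at hh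
      subst hh
      exact (hcomm1 j b).symm
    exact (Subgroup.mem_centralizer_iff.mp (Subgroup.mem_comap.mp ha) _ (Set.mem_singleton _)).symm
  apply le_antisymm
  · rw [commutator_def, Subgroup.commutator_le]
    intro g _ h _
    have hq1 : q ⁅g, h⁆ = 1 := by
      rw [map_commutatorElement]
      exact commutatorElement_eq_one_iff_commute.mpr (hcommQ g h)
    exact (QuotientGroup.eq_one_iff _).mp hq1
  · exact Subgroup.zpowers_le.mpr
      (hw ▸ Subgroup.commutator_mem_commutator (Subgroup.mem_top X) (Subgroup.mem_top Y))
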